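/- Let k ≥ 2 and let G be a C_{2k}-free graph. Then for every vertex v of G, the subgraph induced by the neighborhood of v contains no path with 2k−2 edges, and consequently e(G[N(v)]) ≤ k·d(v). -/

import Mathlib

open Finset SimpleGraph

/-- `epairs G A B` is the number of ordered pairs `(u,v) ∈ A × B` with `u ~ v`;
`epairs G S S` is twice the number of edges inside `S`. -/
def epairs {V : Type*} [DecidableEq V] (G : SimpleGraph V) [DecidableRel G.Adj]
    (A B : Finset V) : ℕ :=
  ((A ×ˢ B).filter fun p => G.Adj p.1 p.2).card

section Aux
variable {V : Type*} {G : SimpleGraph V}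

lemma getVert_mem_support' {a b : V} (p : G.Walk a b) {i : ℕ} (hi : i ≤ p.length) :
    p.getVert i ∈ p.support :=
  Walk.mem_support_iff_exists_getVert.mpr ⟨i, rfl, hi⟩

lemma path_getVert_inj {a b : V} {p : G.Walk a b} (hp : p.IsPath) :
    ∀ {i j : ℕ}, i ≤ p.length → j ≤ p.length → p.getVert i = p.getVert j → i = j := by
  induction p with
  | nil => intro i j hi hj _; simp only [Walk.length_nil, Nat.le_zero] at hi hj; omega
  | @cons u c b h q ih =>
    intro i j hi hj hij
    have hq : q.IsPath := hp.of_cons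
    have hu : u ∉ q.support := ((Walk.cons_isPath_iff h q).mp hp).2
    match i, j with
    | 0, 0 => rfl
    | 0, j+1 =>
      exfalso
      apply hu
      have : (Walk.cons h q).getVert 0 = u := Walk.getVert_zero _
      rw [this, Walk.getVert_cons_succ] at hij
      rw [hij]
      exact getVert_mem_support' q (by simpa using hj)
    | i+1, 0 =>
      exfalso
      apply hu
      have : (Walk.cons h q).getVert 0 = u := Walk.getVert_zero _
      rw [this, Walk.getVert_cons_succ] at hij
      rw [← hij]
      exact getVert_mem_support' q (by simpa using hi)
    | i+1, j+1 =>
      have := ih hq (by simpa using hi) (by simpa using hj)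
        (by rwa [Walk.getVert_cons_succ, Walk.getVert_cons_succ] at hij)
      omega

lemma exists_prefix {a b : V} (p : G.Walk a b) (hp : p.IsPath) :
    ∀ m, m ≤ p.length → ∃ (c : V) (q : G.Walk a c), q.IsPath ∧ q.length = m ∧
      ∀ x ∈ q.support, x ∈ p.support := by
  induction p with
  | nil =>
    intro m hm
    simp only [Walk.length_nil, Nat.le_zero] at hm
    subst hm
    exact ⟨_, Walk.nil, Walk.IsPath.nil, rfl, by simp⟩
  | @cons u c b h q ih =>
    intro m hm
    match m with
    | 0 => exact ⟨_, Walk.nil, Walk.IsPath.nil, rfl, by simp⟩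
    | m+1 =>
      obtain ⟨d, q', h1, h2, h3⟩ := ih hp.of_cons m (by simpa using hm)
      refine ⟨d, Walk.cons h q', ?_, by simp [h2], ?_⟩
      · rw [Walk.cons_isPath_iff]
        exact ⟨h1, fun hx => ((Walk.cons_isPath_iff h q).mp hp).2 (h3 _ hx)⟩
      · intro x hx
        rw [Walk.support_cons] at hx ⊢
        rcases List.mem_cons.mp hx with h | h
        · exact h ▸ List.mem_cons_self
        · exact List.mem_cons_of_mem _ (h3 _ h)

lemma no_nbhd_path (G : SimpleGraph V) (k : ℕ) (hk : 2 ≤ k)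
    (hfree : ∀ (w : V) (c : G.Walk w w), c.IsCycle → c.length ≠ 2 * k) (v : V) :
    ∀ (a b : V) (p : G.Walk a b), p.IsPath →
      (∀ x ∈ p.support, G.Adj v x) → p.length ≠ 2 * k - 2 := by
  intro a b p hp hadj hlen
  have hvnot : v ∉ p.support := fun hv => G.irrefl (hadj v hv)
  have hva : G.Adj v a := hadj a p.start_mem_support
  have hvb : G.Adj v b := hadj b p.end_mem_support
  have hab : a ≠ b := by
    intro h
    subst h
    rw [Walk.isPath_iff_eq_nil.mp hp] at hlen
    simp only [Walk.length_nil] at hlen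
    omega
  set q : G.Walk a v := p.append (Walk.cons hvb.symm Walk.nil) with hq
  have hqsupp : q.support = p.support ++ [v] := by
    rw [hq, Walk.support_append]; simp
  have hqpath : q.IsPath := by
    rw [Walk.isPath_def, hqsupp]
    refine List.Nodup.append hp.support_nodup (List.nodup_singleton v) ?_
    intro x hx hx'
    rw [List.mem_singleton] at hx'
    exact hvnot (hx' ▸ hx)
  have hedge : s(v, a) ∉ q.edges := by
    rw [hq, Walk.edges_append]
    simp only [Walk.edges_cons, Walk.edges_nil, List.mem_append, List.mem_singleton]
    rintro (h1 | h2)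
    · exact hvnot (Walk.fst_mem_support_of_mem_edges p h1)
    · rw [Sym2.eq_iff] at h2
      rcases h2 with ⟨hb, _⟩ | ⟨_, hab'⟩
      · exact hvnot (hb ▸ p.end_mem_support)
      · exact hab hab'
  have hcyc : (Walk.cons hva q).IsCycle := (Walk.cons_isCycle_iff q hva).mpr ⟨hqpath, hedge⟩
  apply hfree v _ hcyc
  rw [Walk.length_cons, hq, Walk.length_append, hlen]
  simp only [Walk.length_cons, Walk.length_nil]
  omega

lemma exists_exit [DecidableEq V] {S : Finset V} {T : List V} :
    ∀ {a b : V} (W : G.Walk a b), a ∈ T → b ∉ T → (∀ x ∈ W.support, x ∈ S) →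
      ∃ u z, G.Adj u z ∧ u ∈ T ∧ z ∉ T ∧ z ∈ S := by
  intro a b W
  induction W with
  | nil => intro ha hb _; exact absurd ha hb
  | @cons u c b h W ih =>
    intro ha hb hS
    by_cases hc : c ∈ T
    · exact ih hc hb (fun x hx => hS x (by rw [Walk.support_cons]; exact List.mem_cons_of_mem _ hx))
    · exact ⟨u, c, h, ha, hc, hS c (by rw [Walk.support_cons]; exact List.mem_cons_of_mem _ W.start_mem_support)⟩

end Aux

lemma main_bound {V : Type*} [Fintype V] [DecidableEq V] (G : SimpleGraph V)
    [DecidableRel G.Adj] (k : ℕ) (hk : 2 ≤ k) (T : Finset V)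
    (hpath : ∀ (a b : V) (p : G.Walk a b), p.IsPath → (∀ x ∈ p.support, x ∈ T) →
      p.length ≤ 2 * k - 3) :
    ∀ S : Finset V, S ⊆ T → (∑ u ∈ S, (G.neighborFinset u ∩ S).card) ≤ 2 * k * S.card := by
  classical
  intro S
  induction S using Finset.strongInductionOn with
  | _ S IH =>
  intro hST
  rcases S.eq_empty_or_nonempty with rfl | ⟨u0, hu0⟩
  · simp
  set C : Finset V := S.filter (fun w => ∃ W : G.Walk u0 w, ∀ x ∈ W.support, x ∈ S) with hC
  have hCsub : C ⊆ S := Finset.filter_subset _ _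
  have hu0C : u0 ∈ C := by
    rw [hC, Finset.mem_filter]
    exact ⟨hu0, Walk.nil, by simp [hu0]⟩
  have hclosed : ∀ w ∈ C, ∀ z ∈ S, G.Adj w z → z ∈ C := by
    intro w hw z hz hadj
    rw [hC, Finset.mem_filter] at hw ⊢
    obtain ⟨hwS, W, hWsupp⟩ := hw
    refine ⟨hz, W.append (Walk.cons hadj Walk.nil), ?_⟩
    intro x hx
    rw [Walk.mem_support_append_iff] at hx
    rcases hx with hx | hx
    · exact hWsupp x hx
    · simp only [Walk.support_cons, Walk.support_nil, List.mem_cons, List.mem_singleton,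
        List.not_mem_nil, or_false] at hx
      rcases hx with rfl | rfl
      · exact hwS
      · exact hz
  by_cases hCS : C = S
  · -- S is connected (from u0)
    have hreach : ∀ w ∈ S, ∃ W : G.Walk u0 w, ∀ x ∈ W.support, x ∈ S := by
      intro w hw
      have : w ∈ C := hCS ▸ hw
      rw [hC, Finset.mem_filter] at this
      exact this.2
    by_cases hsmall : S.card ≤ 2 * k + 1
    · -- small set: trivial bound
      have hbd : ∀ u ∈ S, (G.neighborFinset u ∩ S).card ≤ 2 * k := by
        intro u hu
        have hsub : G.neighborFinset u ∩ S ⊆ S.erase u := by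
          intro z hz
          rw [Finset.mem_inter, SimpleGraph.mem_neighborFinset] at hz
          exact Finset.mem_erase.mpr ⟨hz.1.ne', hz.2⟩
        have := Finset.card_le_card hsub
        rw [Finset.card_erase_of_mem hu] at this
        omega
      calc (∑ u ∈ S, (G.neighborFinset u ∩ S).card) ≤ ∑ _u ∈ S, 2 * k :=
            Finset.sum_le_sum hbd
        _ = 2 * k * S.card := by rw [Finset.sum_const, smul_eq_mul, mul_comm]
    by_cases hdeg : ∃ u ∈ S, (G.neighborFinset u ∩ S).card ≤ k
    · -- delete a low-degree vertex
      obtain ⟨u, huS, hdu⟩ := hdeg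
      set S' := S.erase u with hS'
      have hsplit : (∑ w ∈ S, (G.neighborFinset w ∩ S).card) =
          (G.neighborFinset u ∩ S).card + ∑ w ∈ S', (G.neighborFinset w ∩ S).card :=
        (Finset.add_sum_erase S _ huS).symm
      have hterm : ∀ w ∈ S', (G.neighborFinset w ∩ S).card ≤
          (G.neighborFinset w ∩ S').card + (if G.Adj u w then 1 else 0) := by
        intro w hw
        by_cases ha : G.Adj u w
        · have hsub : G.neighborFinset w ∩ S ⊆ insert u (G.neighborFinset w ∩ S') := by
            intro z hz
            rw [Finset.mem_inter] at hz
            rcases eq_or_ne z u with rfl | hzu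
            · exact Finset.mem_insert_self _ _
            · exact Finset.mem_insert_of_mem
                (Finset.mem_inter.mpr ⟨hz.1, Finset.mem_erase.mpr ⟨hzu, hz.2⟩⟩)
          have := Finset.card_le_card hsub
          have h2 := Finset.card_insert_le u (G.neighborFinset w ∩ S')
          simp only [ha, if_true]
          omega
        · have hsub : G.neighborFinset w ∩ S ⊆ G.neighborFinset w ∩ S' := by
            intro z hz
            rw [Finset.mem_inter] at hz
            refine Finset.mem_inter.mpr ⟨hz.1, Finset.mem_erase.mpr ⟨?_, hz.2⟩⟩
            rintro rfl
            rw [SimpleGraph.mem_neighborFinset] at hz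
            exact ha hz.1.symm
          have := Finset.card_le_card hsub
          simp only [ha, if_false]
          omega
      have hsum2 : (∑ w ∈ S', (G.neighborFinset w ∩ S).card) ≤
          (∑ w ∈ S', (G.neighborFinset w ∩ S').card) + (S'.filter (fun w => G.Adj u w)).card := by
        calc (∑ w ∈ S', (G.neighborFinset w ∩ S).card)
            ≤ ∑ w ∈ S', ((G.neighborFinset w ∩ S').card + (if G.Adj u w then 1 else 0)) :=
              Finset.sum_le_sum hterm
          _ = (∑ w ∈ S', (G.neighborFinset w ∩ S').card) +
              ∑ w ∈ S', (if G.Adj u w then 1 else 0) := Finset.sum_add_distrib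
          _ = _ := by rw [← Finset.card_filter]
      have hfilter : (S'.filter (fun w => G.Adj u w)).card ≤ k := by
        refine le_trans (Finset.card_le_card ?_) hdu
        intro w hw
        rw [Finset.mem_filter] at hw
        exact Finset.mem_inter.mpr ⟨SimpleGraph.mem_neighborFinset _ _ _ |>.mpr hw.2,
          Finset.mem_of_mem_erase hw.1⟩
      have hIH : (∑ w ∈ S', (G.neighborFinset w ∩ S').card) ≤ 2 * k * S'.card :=
        IH S' (Finset.erase_ssubset huS) ((Finset.erase_subset _ _).trans hST)
      have hcard : S'.card = S.card - 1 := Finset.card_erase_of_mem huS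
      have hpos : 1 ≤ S.card := Finset.card_pos.mpr ⟨u0, hu0⟩
      have h2k : 2 * k * S'.card + 2 * k = 2 * k * S.card := by
        rw [hcard, ← Nat.mul_succ]
        congr 1
        omega
      omega
    · -- min degree ≥ k+1, connected, large: contradiction
      exfalso
      push_neg at hdeg hsmall
      -- minimum degree ≥ k+1 within S
      have hmindeg : ∀ u ∈ S, k + 1 ≤ (G.neighborFinset u ∩ S).card := fun u hu => hdeg u hu
      -- longest path machinery
      set P : ℕ → Prop := fun n => ∃ (a b : V) (p : G.Walk a b), p.IsPath ∧
        (∀ x ∈ p.support, x ∈ S) ∧ p.length = n with hPdef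
      have hP0 : P 0 := ⟨u0, u0, Walk.nil, Walk.IsPath.nil, by simp [hu0], rfl⟩
      set L : ℕ := Nat.findGreatest P (Fintype.card V) with hLdef
      have hPL : P L := Nat.findGreatest_spec (Nat.zero_le _) hP0
      have hmax : ∀ n, P n → n ≤ L := by
        intro n hn
        obtain ⟨a, b, q, hq, -, hlen⟩ := id hn
        exact Nat.le_findGreatest (hlen ▸ hq.length_lt.le) hn
      obtain ⟨x, y, p, hp, hpS, hplen⟩ := hPL
      have hxS : x ∈ S := hpS x p.start_mem_support
      have hyS : y ∈ S := hpS y p.end_mem_support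
      -- maximality: neighbors of endpoints lie on the path
      have hNy : ∀ z, G.Adj y z → z ∈ S → z ∈ p.support := by
        intro z hadj hzS
        by_contra hznot
        have hq : (p.append (Walk.cons hadj Walk.nil)).IsPath := by
          rw [Walk.isPath_def, Walk.support_append]
          simp only [Walk.support_cons, Walk.support_nil, List.tail_cons]
          refine List.Nodup.append hp.support_nodup (List.nodup_singleton z) ?_
          intro t ht ht'
          rw [List.mem_singleton] at ht'
          exact hznot (ht' ▸ ht)
        have hle := hmax (L + 1) ⟨x, z, _, hq, ?_, ?_⟩
        · omega
        · intro t ht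
          rw [Walk.mem_support_append_iff] at ht
          rcases ht with ht | ht
          · exact hpS t ht
          · simp only [Walk.support_cons, Walk.support_nil, List.mem_cons, List.mem_singleton,
              List.not_mem_nil, or_false] at ht
            rcases ht with rfl | rfl
            · exact hyS
            · exact hzS
        · rw [Walk.length_append, hplen]; simp
      have hNx : ∀ z, G.Adj x z → z ∈ S → z ∈ p.support := by
        intro z hadj hzS
        by_contra hznot
        have hq : (Walk.cons hadj.symm p).IsPath :=
          (Walk.cons_isPath_iff _ _).mpr ⟨hp, hznot⟩
        have hle := hmax (L + 1) ⟨z, y, _, hq, ?_, ?_⟩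
        · omega
        · intro t ht
          rw [Walk.support_cons, List.mem_cons] at ht
          rcases ht with rfl | ht
          · exact hzS
          · exact hpS t ht
        · rw [Walk.length_cons, hplen]
      -- support cardinality
      have hsuppnd := hp.support_nodup
      have hsuppcard : p.support.toFinset.card = L + 1 := by
        rw [List.toFinset_card_of_nodup hsuppnd, Walk.length_support, hplen]
      -- lower bound on L
      have hLge : k + 1 ≤ L := by
        have h1 : G.neighborFinset y ∩ S ⊆ p.support.toFinset.erase y := by
          intro z hz
          rw [Finset.mem_inter, SimpleGraph.mem_neighborFinset] at hz
          exact Finset.mem_erase.mpr ⟨hz.1.ne', List.mem_toFinset.mpr (hNy z hz.1 hz.2)⟩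
        have h2 := Finset.card_le_card h1
        rw [Finset.card_erase_of_mem (List.mem_toFinset.mpr p.end_mem_support), hsuppcard] at h2
        have := hmindeg y hyS
        omega
      -- upper bound on L
      have hLle : L ≤ 2 * k - 3 :=
        hplen ▸ hpath x y p hp (fun t ht => hST (hpS t ht))
      -- crossing index sets
      set A : Finset ℕ := (Finset.range L).filter (fun i => G.Adj x (p.getVert (i + 1))) with hAdef
      set B : Finset ℕ := (Finset.range L).filter (fun i => G.Adj y (p.getVert i)) with hBdef
      set f : V → ℕ := fun w =>
        if h : w ∈ p.support then Classical.choose (Walk.mem_support_iff_exists_getVert.mp h)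
        else 0 with hfdef
      have hf : ∀ w (h : w ∈ p.support), p.getVert (f w) = w ∧ f w ≤ p.length := by
        intro w h
        rw [hfdef]
        simp only [h, dif_pos]
        exact Classical.choose_spec (Walk.mem_support_iff_exists_getVert.mp h)
      have hfinj : ∀ w₁ w₂, w₁ ∈ p.support → w₂ ∈ p.support → f w₁ = f w₂ → w₁ = w₂ := by
        intro w₁ w₂ h1 h2 hff
        have e1 := (hf w₁ h1).1
        have e2 := (hf w₂ h2).1
        rw [← e1, ← e2, hff]
      have hAcard : k + 1 ≤ A.card := by
        refine le_trans (hmindeg x hxS) (Finset.card_le_card_of_injOn (fun w => f w - 1) ?_ ?_)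
        · intro w hw
          rw [Finset.mem_coe, Finset.mem_inter, SimpleGraph.mem_neighborFinset] at hw
          have hwsupp : w ∈ p.support := hNx w hw.1 hw.2
          obtain ⟨he, hle⟩ := hf w hwsupp
          have hne : f w ≠ 0 := by
            intro h0
            rw [h0, Walk.getVert_zero] at he
            exact G.irrefl (he ▸ hw.1)
          show f w - 1 ∈ A
          rw [hAdef, Finset.mem_filter, Finset.mem_range]
          constructor
          · rw [hplen] at hle; omega
          · have heq : f w - 1 + 1 = f w := by omega
            rw [heq, he]
            exact hw.1
        · intro w₁ hw1 w₂ hw2 hff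
          rw [Finset.coe_inter, Set.mem_inter_iff, Finset.mem_coe, Finset.mem_coe,
            SimpleGraph.mem_neighborFinset] at hw1 hw2
          have hs1 : w₁ ∈ p.support := hNx w₁ hw1.1 hw1.2
          have hs2 : w₂ ∈ p.support := hNx w₂ hw2.1 hw2.2
          have hne1 : f w₁ ≠ 0 := by
            intro h0
            have := (hf w₁ hs1).1
            rw [h0, Walk.getVert_zero] at this
            exact G.irrefl (this ▸ hw1.1)
          have hne2 : f w₂ ≠ 0 := by
            intro h0
            have := (hf w₂ hs2).1
            rw [h0, Walk.getVert_zero] at this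
            exact G.irrefl (this ▸ hw2.1)
          have hff' : f w₁ - 1 = f w₂ - 1 := hff
          exact hfinj w₁ w₂ hs1 hs2 (by omega)
      have hBcard : k + 1 ≤ B.card := by
        refine le_trans (hmindeg y hyS) (Finset.card_le_card_of_injOn f ?_ ?_)
        · intro w hw
          rw [Finset.mem_coe, Finset.mem_inter, SimpleGraph.mem_neighborFinset] at hw
          have hwsupp : w ∈ p.support := hNy w hw.1 hw.2
          obtain ⟨he, hle⟩ := hf w hwsupp
          have hne : f w ≠ p.length := by
            intro h0
            rw [h0, Walk.getVert_length] at he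
            exact G.irrefl (he ▸ hw.1)
          rw [Finset.mem_coe, hBdef, Finset.mem_filter, Finset.mem_range]
          constructor
          · rw [hplen] at hle hne; omega
          · rw [he]; exact hw.1
        · intro w₁ hw1 w₂ hw2 hff
          rw [Finset.coe_inter, Set.mem_inter_iff, Finset.mem_coe, Finset.mem_coe,
            SimpleGraph.mem_neighborFinset] at hw1 hw2
          exact hfinj w₁ w₂ (hNy w₁ hw1.1 hw1.2) (hNy w₂ hw2.1 hw2.2) hff
      -- A and B intersect
      have hABunion : (A ∪ B).card ≤ L := by
        refine le_trans (Finset.card_le_card ?_) (by rw [Finset.card_range])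
        rw [hAdef, hBdef]
        exact Finset.union_subset (Finset.filter_subset _ _) (Finset.filter_subset _ _)
      have hABinter : (A ∩ B).Nonempty := by
        rw [← Finset.card_pos]
        have := Finset.card_union_add_card_inter A B
        omega
      obtain ⟨i, hiAB⟩ := hABinter
      rw [Finset.mem_inter] at hiAB
      have hiA := hiAB.1
      have hiB := hiAB.2
      rw [hAdef, Finset.mem_filter, Finset.mem_range] at hiA
      rw [hBdef, Finset.mem_filter, Finset.mem_range] at hiB
      obtain ⟨hiL, hxw2⟩ := hiA
      obtain ⟨-, hyw1⟩ := hiB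
      set w1 : V := p.getVert i with hw1def
      set w2 : V := p.getVert (i + 1) with hw2def
      have hw2mem : w2 ∈ p.support :=
        Walk.mem_support_iff_exists_getVert.mpr ⟨i + 1, rfl, by omega⟩
      set r : G.Walk x w2 := p.takeUntil w2 hw2mem with hrdef
      set s : G.Walk w2 y := p.dropUntil w2 hw2mem with hsdef
      have hspec : r.append s = p := p.take_spec hw2mem
      have hrpath : r.IsPath := hp.takeUntil hw2mem
      have hspath : s.IsPath := hp.dropUntil hw2mem
      have hrsle : r.length ≤ p.length := p.length_takeUntil_le hw2mem
      have hlensum : r.length + s.length = L := by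
        have := congrArg Walk.length hspec
        rw [Walk.length_append, hplen] at this
        exact this
      have hgetr : ∀ j, j ≤ r.length → r.getVert j = p.getVert j := by
        intro j hj
        conv_rhs => rw [← hspec]
        rw [Walk.getVert_append]
        rcases lt_or_eq_of_le hj with hj' | hj'
        · rw [if_pos hj']
        · subst hj'
          rw [if_neg (lt_irrefl _), Nat.sub_self, Walk.getVert_zero, Walk.getVert_length]
      have hrlen : r.length = i + 1 := by
        have h1 : p.getVert r.length = p.getVert (i + 1) := by
          rw [← hgetr r.length le_rfl, Walk.getVert_length]
        exact path_getVert_inj hp (by omega) (by rw [hplen]; omega) h1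
      have hrw1 : r.getVert i = w1 := by rw [hgetr i (by omega)]
      have hrrev_not_nil : ¬ r.reverse.Nil := by
        rw [Walk.not_nil_iff_lt_length, Walk.length_reverse]
        omega
      have hq1end : r.reverse.getVert 1 = w1 := by
        rw [Walk.getVert_reverse]
        have : r.length - 1 = i := by omega
        rw [this, hrw1]
      set q1 : G.Walk w1 x := (r.reverse.tail).copy hq1end rfl with hq1def
      have hq1path : q1.IsPath := by
        rw [hq1def, Walk.isPath_copy]
        exact hrpath.reverse.tail
      have hq1supp : q1.support = r.reverse.support.tail := by
        rw [hq1def, Walk.support_copy, Walk.support_tail_of_not_nil _ hrrev_not_nil]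
      have hrrevsupp : r.reverse.support = w2 :: q1.support := by
        rw [hq1supp]
        exact r.reverse.support_eq_cons
      have hq1w2 : w2 ∉ q1.support := by
        have := hrpath.reverse.support_nodup
        rw [hrrevsupp] at this
        exact (List.nodup_cons.mp this).1
      have hq1sub : ∀ z ∈ q1.support, z ∈ r.support := by
        intro z hz
        have : z ∈ r.reverse.support := by rw [hrrevsupp]; exact List.mem_cons_of_mem _ hz
        rwa [Walk.support_reverse, List.mem_reverse] at this
      have hq1sup2 : ∀ z ∈ r.support, z = w2 ∨ z ∈ q1.support := by
        intro z hz
        have : z ∈ r.reverse.support := by rwa [Walk.support_reverse, List.mem_reverse]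
        rw [hrrevsupp, List.mem_cons] at this
        exact this
      have hps : p.support = r.support ++ s.support.tail := by
        rw [← hspec, Walk.support_append]
      have hdisj : ∀ z ∈ r.support, z ∈ s.support.tail → False := by
        have : (r.support ++ s.support.tail).Nodup := hps ▸ hsuppnd
        intro z h1 h2
        exact List.disjoint_of_nodup_append this h1 h2
      have hssupp : s.support = w2 :: s.support.tail := s.support_eq_cons
      -- the rotated walk W
      set W : G.Walk w2 x := s.append (Walk.cons hyw1 q1) with hWdef
      have hWsupp : W.support = s.support ++ q1.support := by
        rw [hWdef, Walk.support_append, Walk.support_cons, List.tail_cons]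
      have hWpath : W.IsPath := by
        rw [Walk.isPath_def, hWsupp]
        refine List.Nodup.append hspath.support_nodup hq1path.support_nodup ?_
        intro z hz1 hz2
        have hzr := hq1sub z hz2
        have hzne : z ≠ w2 := fun h => hq1w2 (h ▸ hz2)
        rw [hssupp, List.mem_cons] at hz1
        rcases hz1 with rfl | hz1
        · exact hzne rfl
        · exact hdisj z hzr hz1
      have hx_notin_s : x ∉ s.support := by
        intro hx
        have hxr : x ∈ r.support := r.start_mem_support
        rw [hssupp, List.mem_cons] at hx
        rcases hx with hx | hx
        · exact hxw2.ne hx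
        · exact hdisj x hxr hx
      have hxy : x ≠ y := by
        intro h
        have h0 : p.getVert 0 = p.getVert p.length := by
          rw [Walk.getVert_zero, Walk.getVert_length]; exact h
        have := path_getVert_inj hp (by omega) le_rfl h0
        rw [hplen] at this
        omega
      have hedge : s(x, w2) ∉ W.edges := by
        rw [hWdef, Walk.edges_append, Walk.edges_cons]
        intro hmem
        rw [List.mem_append] at hmem
        rcases hmem with hmem | hmem
        · exact hx_notin_s (Walk.fst_mem_support_of_mem_edges s hmem)
        · rw [List.mem_cons] at hmem
          rcases hmem with hmem | hmem
          · rw [Sym2.eq_iff] at hmem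
            rcases hmem with ⟨h1, h2⟩ | ⟨h1, h2⟩
            · exact hxy h1
            · -- x = w1 and w2 = y : gives i = 0 and i+1 = L, so L = 1 < k+1
              have e1 : (0 : ℕ) = i := path_getVert_inj hp (by omega) (by omega)
                (by rw [Walk.getVert_zero, ← hw1def]; exact h1)
              have e2 : i + 1 = p.length := path_getVert_inj hp (by omega) le_rfl
                (by rw [← hw2def, p.getVert_length]; exact h2)
              rw [hplen] at e2
              omega
          · exact hq1w2 (Walk.snd_mem_support_of_mem_edges q1 hmem)
      set c : G.Walk x x := Walk.cons hxw2 W with hcdef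
      have hcyc : c.IsCycle := (Walk.cons_isCycle_iff W hxw2).mpr ⟨hWpath, hedge⟩
      have hq1len : q1.length + 1 = r.length := by
        rw [hq1def, Walk.length_copy]
        rw [← Walk.length_reverse r]
        exact Walk.length_tail_add_one hrrev_not_nil
      have hclen : c.length = L + 1 := by
        rw [hcdef, Walk.length_cons, hWdef, Walk.length_append, Walk.length_cons]
        omega
      have hcsupp : ∀ z, z ∈ c.support ↔ z ∈ p.support := by
        intro z
        rw [hcdef, Walk.support_cons, List.mem_cons, hWsupp]
        constructor
        · rintro (rfl | hz)
          · exact p.start_mem_support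
          · rw [List.mem_append] at hz
            rcases hz with hz | hz
            · rw [hssupp, List.mem_cons] at hz
              rcases hz with rfl | hz
              · exact hw2mem
              · rw [hps]; exact List.mem_append_right _ hz
            · rw [hps]; exact List.mem_append_left _ (hq1sub z hz)
        · intro hz
          rw [hps, List.mem_append] at hz
          rcases hz with hz | hz
          · rcases hq1sup2 z hz with rfl | hz'
            · right; rw [List.mem_append]; left; exact s.start_mem_support
            · right; rw [List.mem_append]; right; exact hz'
          · right; rw [List.mem_append]; left
            rw [hssupp]; exact List.mem_cons_of_mem _ hz
      -- find a vertex outside the path, connected to it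
      have hnotsub : ¬ (S ⊆ p.support.toFinset) := by
        intro hsub
        have := Finset.card_le_card hsub
        rw [hsuppcard] at this
        omega
      obtain ⟨w0, hw0S, hw0p⟩ := Finset.not_subset.mp hnotsub
      rw [List.mem_toFinset] at hw0p
      obtain ⟨Wx, hWxS⟩ := hreach x hxS
      obtain ⟨Ww, hWwS⟩ := hreach w0 hw0S
      set Wxw : G.Walk x w0 := Wx.reverse.append Ww with hWxwdef
      have hWxwS : ∀ t ∈ Wxw.support, t ∈ S := by
        intro t ht
        rw [hWxwdef, Walk.mem_support_append_iff] at ht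
        rcases ht with ht | ht
        · rw [Walk.support_reverse, List.mem_reverse] at ht
          exact hWxS t ht
        · exact hWwS t ht
      obtain ⟨u, z, hadj, huP, hzP, hzS⟩ :=
        exists_exit Wxw p.start_mem_support hw0p hWxwS
      -- rotate the cycle to u and extend by z
      have hu_c : u ∈ c.support := (hcsupp u).mpr huP
      set c' : G.Walk u u := c.rotate u hu_c with hc'def
      have hcyc' : c'.IsCycle := hcyc.rotate hu_c
      have hc'len : c'.length = L + 1 := by
        have h1 := congrArg Walk.length (c.take_spec hu_c)
        rw [Walk.length_append] at h1
        rw [hc'def, Walk.rotate, Walk.length_append]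
        omega
      have hc'supp : ∀ t, t ∈ c'.support → t ∈ c.support := by
        intro t ht
        rw [hc'def, Walk.rotate, Walk.mem_support_append_iff] at ht
        rcases ht with ht | ht
        · exact c.support_dropUntil_subset hu_c ht
        · exact c.support_takeUntil_subset hu_c ht
      have hc'notnil : ¬ c'.Nil := hcyc'.not_nil
      obtain ⟨b', h', q', hc'eq⟩ := Walk.not_nil_iff.mp hc'notnil
      have hq'path : q'.IsPath := ((Walk.cons_isCycle_iff q' h').mp (hc'eq ▸ hcyc')).1
      have hq'supp : ∀ t, t ∈ q'.support → t ∈ p.support := by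
        intro t ht
        refine (hcsupp t).mp (hc'supp t ?_)
        rw [hc'eq, Walk.support_cons]
        exact List.mem_cons_of_mem _ ht
      have hq'len : q'.length = L := by
        have := congrArg Walk.length hc'eq
        rw [Walk.length_cons] at this
        omega
      -- the longer path
      have hznotin : z ∉ q'.reverse.support := by
        rw [Walk.support_reverse, List.mem_reverse]
        intro hz
        exact hzP (hq'supp z hz)
      have hfinpath : (Walk.cons hadj.symm q'.reverse).IsPath :=
        (Walk.cons_isPath_iff _ _).mpr ⟨hq'path.reverse, hznotin⟩
      have hfinal := hmax (L + 1) ⟨z, b', Walk.cons hadj.symm q'.reverse, hfinpath, ?_, ?_⟩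
      · omega
      · intro t ht
        rw [Walk.support_cons, List.mem_cons] at ht
        rcases ht with rfl | ht
        · exact hzS
        · rw [Walk.support_reverse, List.mem_reverse] at ht
          exact hpS t (hq'supp t ht)
      · rw [Walk.length_cons, Walk.length_reverse, hq'len]
  · -- split into component C and the rest
    have hC_ne : C.Nonempty := ⟨u0, hu0C⟩
    have hCss : C ⊂ S := (Finset.ssubset_iff_subset_ne).mpr ⟨hCsub, hCS⟩
    have hDss : S \ C ⊂ S := Finset.sdiff_ssubset hCsub hC_ne
    have h1 : ∀ w ∈ C, G.neighborFinset w ∩ S = G.neighborFinset w ∩ C := by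
      intro w hw
      ext z
      simp only [Finset.mem_inter, SimpleGraph.mem_neighborFinset]
      constructor
      · rintro ⟨h, hz⟩; exact ⟨h, hclosed w hw z hz h⟩
      · rintro ⟨h, hz⟩; exact ⟨h, hCsub hz⟩
    have h2 : ∀ w ∈ S \ C, G.neighborFinset w ∩ S = G.neighborFinset w ∩ (S \ C) := by
      intro w hw
      rw [Finset.mem_sdiff] at hw
      ext z
      simp only [Finset.mem_inter, SimpleGraph.mem_neighborFinset, Finset.mem_sdiff]
      constructor
      · rintro ⟨h, hz⟩
        refine ⟨h, hz, fun hzC => hw.2 (hclosed z hzC w hw.1 h.symm)⟩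
      · rintro ⟨h, hz, _⟩; exact ⟨h, hz⟩
    have hsum : (∑ u ∈ S, (G.neighborFinset u ∩ S).card) =
        (∑ u ∈ S \ C, (G.neighborFinset u ∩ (S \ C)).card) +
        (∑ u ∈ C, (G.neighborFinset u ∩ C).card) := by
      rw [← Finset.sum_sdiff hCsub]
      congr 1
      · exact Finset.sum_congr rfl fun w hw => by rw [h2 w hw]
      · exact Finset.sum_congr rfl fun w hw => by rw [h1 w hw]
    have hIH1 := IH C hCss (hCsub.trans hST)
    have hIH2 := IH (S \ C) hDss ((Finset.sdiff_subset).trans hST)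
    have hcard : (S \ C).card + C.card = S.card := Finset.card_sdiff_add_card_eq_card hCsub
    rw [hsum]
    calc _ ≤ 2 * k * (S \ C).card + 2 * k * C.card := Nat.add_le_add hIH2 hIH1
      _ = 2 * k * S.card := by rw [← Nat.mul_add, hcard]


/-- If `k ≥ 2` and `G` contains no cycle of length `2k`, then for every vertex `v`,
the subgraph induced on `N(v)` contains no path with `2k−2` edges, and consequently
`e(G[N(v)]) ≤ k·d(v)` (stated as `2·e(G[N(v)]) ≤ 2·k·d(v)` via ordered pairs). -/
theorem stmt_7 {V : Type*} [Fintype V] [DecidableEq V]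
    (G : SimpleGraph V) [DecidableRel G.Adj] (k : ℕ) (hk : 2 ≤ k)
    (hfree : ∀ (w : V) (c : G.Walk w w), c.IsCycle → c.length ≠ 2 * k)
    (v : V) :
    (∀ (a b : V) (p : G.Walk a b), p.IsPath →
        (∀ x ∈ p.support, G.Adj v x) → p.length ≠ 2 * k - 2) ∧
    epairs G (G.neighborFinset v) (G.neighborFinset v) ≤ 2 * k * G.degree v := by
  have part1 := no_nbhd_path G k hk hfree v
  refine ⟨part1, ?_⟩
  have hpathbd : ∀ (a b : V) (p : G.Walk a b), p.IsPath →
      (∀ x ∈ p.support, x ∈ G.neighborFinset v) → p.length ≤ 2 * k - 3 := by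
    intro a b p hp hsupp
    by_contra hlong
    have hge : 2 * k - 2 ≤ p.length := by omega
    obtain ⟨c, q, hq, hqlen, hqsub⟩ := exists_prefix p hp (2 * k - 2) hge
    exact part1 a c q hq
      (fun x hx => (SimpleGraph.mem_neighborFinset _ _ _).mp (hsupp x (hqsub x hx))) hqlen
  have hmain := main_bound G k hk (G.neighborFinset v) hpathbd (G.neighborFinset v) subset_rfl
  have hepairs : epairs G (G.neighborFinset v) (G.neighborFinset v) =
      ∑ u ∈ G.neighborFinset v, (G.neighborFinset u ∩ G.neighborFinset v).card := by
    rw [epairs, Finset.card_filter, Finset.sum_product]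
    refine Finset.sum_congr rfl fun u _ => ?_
    rw [← Finset.card_filter]
    congr 1
    ext z
    simp only [Finset.mem_filter, Finset.mem_inter, SimpleGraph.mem_neighborFinset]
    tauto
  rw [hepairs, ← G.card_neighborFinset_eq_degree v]
  exact hmain
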